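/- Let F be a field, V a finite-dimensional F-vector space and q : V → F a non-degenerate isotropic quadratic form. Then the diameter of the representation graph G_{q,0} equals 2; in particular G_{q,0} is connected. -/

import Mathlib

open QuadraticMap Module

/-- The representation graph `G_{q,a}`: vertices are the vectors of `V`, and distinct
`x, y` are adjacent iff `q (x - y) = a`. -/
def repGraph {F V : Type*} [Field F] [AddCommGroup V] [Module F V]
    (q : QuadraticForm F V) (a : F) : SimpleGraph V where
  Adj x y := x ≠ y ∧ q (x - y) = a
  symm := by
    constructor
    rintro x y ⟨hxy, h⟩
    refine ⟨hxy.symm, ?_⟩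
    rw [← neg_sub x y, QuadraticMap.map_neg]
    exact h
  loopless := by constructor; rintro x ⟨h, -⟩; exact h rfl

lemma key_midpoint {F V : Type*} [Field F] [AddCommGroup V] [Module F V]
    (q : QuadraticForm F V)
    (hnd : ∀ x : V, (∀ y : V, polar (⇑q) x y = 0) → x = 0)
    (hiso : ∃ v : V, v ≠ 0 ∧ q v = 0) :
    ∀ w : V, q w ≠ 0 → ∃ t : V, q t = 0 ∧ q (t - w) = 0 ∧ t ≠ 0 ∧ t ≠ w := by
  have hqadd : ∀ x y : V, q (x + y) = q x + q y + polar ⇑q x y := by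
    intro x y; simp only [polar]; ring
  obtain ⟨v, hv0, hqv⟩ := hiso
  -- build a hyperbolic pair v, u
  have hpair : ∃ u : V, q u = 0 ∧ polar ⇑q v u = 1 := by
    obtain ⟨s, hs⟩ : ∃ s, polar ⇑q v s ≠ 0 := by
      by_contra h; push_neg at h; exact hv0 (hnd v h)
    obtain ⟨u0, hbu0⟩ : ∃ u0, polar ⇑q v u0 = 1 :=
      ⟨(polar ⇑q v s)⁻¹ • s, by rw [polar_smul_right, smul_eq_mul]; field_simp⟩
    refine ⟨u0 + (-(q u0)) • v, ?_, ?_⟩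
    · rw [hqadd, QuadraticMap.map_smul, polar_smul_right, polar_comm ⇑q u0 v, hbu0, hqv,
        smul_eq_mul, smul_eq_mul]
      ring
    · rw [polar_add_right, polar_smul_right, polar_self, hqv, hbu0, smul_eq_mul]
      simp
  obtain ⟨u, hqu, hbu⟩ := hpair
  have hvv : polar ⇑q v v = 0 := by rw [polar_self, hqv]; simp
  have huu : polar ⇑q u u = 0 := by rw [polar_self, hqu]; simp
  have huv : polar ⇑q u v = 1 := by rw [polar_comm]; exact hbu
  -- key: for every w with q w ≠ 0, there is an isotropic t0 with polar t0 w ≠ 0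
  have hmain : ∀ w : V, q w ≠ 0 → ∃ t0 : V, q t0 = 0 ∧ polar ⇑q t0 w ≠ 0 := by
    intro w hw
    by_cases h1 : polar ⇑q v w ≠ 0
    · exact ⟨v, hqv, h1⟩
    by_cases h2 : polar ⇑q u w ≠ 0
    · exact ⟨u, hqu, h2⟩
    push_neg at h1 h2
    have hw0 : w ≠ 0 := by rintro rfl; exact hw (QuadraticMap.map_zero q)
    obtain ⟨s1, hs1⟩ : ∃ s1, polar ⇑q w s1 ≠ 0 := by
      by_contra h; push_neg at h; exact hw0 (hnd w h)
    obtain ⟨s', hvs', hus', hws'⟩ :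
        ∃ s' : V, polar ⇑q v s' = 0 ∧ polar ⇑q u s' = 0 ∧ polar ⇑q w s' = polar ⇑q w s1 := by
      refine ⟨s1 - (polar ⇑q u s1) • v - (polar ⇑q v s1) • u, ?_, ?_, ?_⟩
      · rw [polar_sub_right, polar_sub_right, polar_smul_right, polar_smul_right,
          hvv, hbu, smul_eq_mul, smul_eq_mul]
        ring
      · rw [polar_sub_right, polar_sub_right, polar_smul_right, polar_smul_right,
          huu, huv, smul_eq_mul, smul_eq_mul]
        ring
      · rw [polar_sub_right, polar_sub_right, polar_smul_right, polar_smul_right,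
          polar_comm ⇑q w v, polar_comm ⇑q w u, h1, h2, smul_eq_mul, smul_eq_mul]
        ring
    refine ⟨v + (-(q s')) • u + s', ?_, ?_⟩
    · rw [hqadd, hqadd, QuadraticMap.map_smul, polar_smul_right, polar_add_left,
        polar_smul_left, hqv, hqu, hbu, hvs', hus', smul_eq_mul, smul_eq_mul, smul_eq_mul]
      ring
    · rw [polar_add_left, polar_add_left, polar_smul_left, polar_comm ⇑q s' w,
        h1, h2, hws', smul_eq_mul]
      simpa using hs1
  intro w hw
  obtain ⟨t0, ht0, hbt0⟩ := hmain w hw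
  refine ⟨(q w / polar ⇑q t0 w) • t0, ?_, ?_, ?_, ?_⟩
  · rw [QuadraticMap.map_smul, ht0, smul_eq_mul, mul_zero]
  · have hb : polar ⇑q ((q w / polar ⇑q t0 w) • t0) w = q w := by
      rw [polar_smul_left, smul_eq_mul]; field_simp
    rw [sub_eq_add_neg, hqadd, QuadraticMap.map_smul, QuadraticMap.map_neg,
      polar_neg_right, ht0, hb, smul_eq_mul]
    ring
  · intro h
    apply hw
    have := congrArg (fun z => polar ⇑q z w) h
    simp only [polar_smul_left, polar_zero_left, smul_eq_mul] at this
    field_simp at this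
    exact this
  · intro h
    apply hw
    rw [← h, QuadraticMap.map_smul, ht0, smul_eq_mul, mul_zero]

/-- For a non-degenerate isotropic quadratic form `q` on a finite-dimensional vector space,
the representation graph `G_{q,0}` has diameter `2`; in particular it is connected. -/
theorem stmt_0 {F V : Type*} [Field F] [AddCommGroup V] [Module F V] [FiniteDimensional F V]
    (q : QuadraticForm F V)
    (hnd : ∀ x : V, (∀ y : V, polar (⇑q) x y = 0) → x = 0)
    (hiso : ∃ v : V, v ≠ 0 ∧ q v = 0) :
    (repGraph q 0).ediam = 2 ∧ (repGraph q 0).Connected := by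
  have key := key_midpoint q hnd hiso
  obtain ⟨v, hv0, hqv⟩ := hiso
  -- every distance is at most 2
  have hdist : ∀ x y : V, (repGraph q 0).edist x y ≤ 2 := by
    intro x y
    by_cases hxy : x = y
    · subst hxy; simp [SimpleGraph.edist_self]
    by_cases hq : q (x - y) = 0
    · have : (repGraph q 0).edist x y = 1 :=
        SimpleGraph.edist_eq_one_iff_adj.mpr ⟨hxy, hq⟩
      rw [this]; exact one_le_two
    · obtain ⟨t, ht, htw, ht0, htw'⟩ := key (x - y) hq
      set z := y + t with hz
      have hadj1 : (repGraph q 0).Adj x z := by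
        refine ⟨?_, ?_⟩
        · intro h
          apply htw'
          have h2 : x - y = t := by rw [h, hz]; abel
          exact h2.symm
        · have hxz : x - z = -(t - (x - y)) := by rw [hz]; abel
          rw [hxz, QuadraticMap.map_neg, htw]
      have hadj2 : (repGraph q 0).Adj z y := by
        refine ⟨?_, ?_⟩
        · intro h
          apply ht0
          have h2 : t = z - y := by rw [hz]; abel
          rw [h2, h, sub_self]
        · have hzy : z - y = t := by rw [hz]; abel
          rw [hzy, ht]
      calc (repGraph q 0).edist x y ≤ (repGraph q 0).edist x z + (repGraph q 0).edist z y :=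
            SimpleGraph.edist_triangle
        _ = 1 + 1 := by
            rw [SimpleGraph.edist_eq_one_iff_adj.mpr hadj1,
              SimpleGraph.edist_eq_one_iff_adj.mpr hadj2]
        _ = 2 := by norm_num
  have hle : (repGraph q 0).ediam ≤ 2 := SimpleGraph.ediam_le_of_edist_le hdist
  -- a vector with q w ≠ 0 exists
  have hex : ∃ w : V, q w ≠ 0 := by
    by_contra h
    push_neg at h
    apply hv0
    apply hnd
    intro y
    simp [polar, h]
  obtain ⟨w, hw⟩ := hex
  have hw0 : w ≠ 0 := by rintro rfl; exact hw (QuadraticMap.map_zero q)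
  have h1lt : 1 < (repGraph q 0).edist 0 w := by
    have hne0 : (repGraph q 0).edist 0 w ≠ 0 :=
      fun h => hw0 (SimpleGraph.edist_eq_zero_iff.mp h).symm
    have hne1 : (repGraph q 0).edist 0 w ≠ 1 := by
      intro h
      have := SimpleGraph.edist_eq_one_iff_adj.mp h
      exact hw (by simpa [QuadraticMap.map_neg] using this.2)
    have : 1 ≤ (repGraph q 0).edist 0 w := Order.one_le_iff_pos.mpr (pos_iff_ne_zero.mpr hne0)
    exact lt_of_le_of_ne this (Ne.symm hne1)
  have hge : 2 ≤ (repGraph q 0).ediam := by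
    have : (2 : ℕ∞) ≤ (repGraph q 0).edist 0 w := by
      have := (ENat.add_one_le_iff (n := (repGraph q 0).edist 0 w) (m := 1) (by simp)).mpr h1lt
      simpa [one_add_one_eq_two] using this
    exact this.trans SimpleGraph.edist_le_ediam
  refine ⟨le_antisymm hle hge, ?_⟩
  rw [SimpleGraph.connected_iff]
  refine ⟨fun x y => ?_, ⟨0⟩⟩
  apply SimpleGraph.reachable_of_edist_ne_top
  intro h
  have := hdist x y
  rw [h] at this
  simp at this
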